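/- Every play that conforms to the eager strategy Σ_A of participant A is a play in which A is innocent, provided the play is fair with respect to Σ_A. That is, if σ is a fair play conforming to the eager strategy Σ_A(σ') = {e ∈ π⁻¹(A) : the set of events of σ' enables e}, then A is innocent in σ. -/

import Mathlib

namespace ESC

/-- Labelled event structure data: events, conflict, enabling, labelling (relational). -/
structure LES (Ev Act : Type) where
  events : Set Ev
  conf : Ev → Ev → Prop
  enab : Set Ev → Ev → Prop
  lab : Ev → Act → Prop

/-- Conflict-freeness of a set of events. -/
def CF {Ev : Type} (C : Ev → Ev → Prop) (X : Set Ev) : Prop :=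
  ∀ e ∈ X, ∀ e' ∈ X, ¬ C e e'

/-- Well-formedness: irreflexive symmetric conflict, saturated enabling over
finite conflict-free subsets, labelling a (partial) function on events. -/
structure IsES {Ev Act : Type} (E : LES Ev Act) : Prop where
  conf_mem : ∀ e e', E.conf e e' → e ∈ E.events ∧ e' ∈ E.events
  conf_irrefl : ∀ e, ¬ E.conf e e
  conf_symm : ∀ e e', E.conf e e' → E.conf e' e
  enab_dom : ∀ X e, E.enab X e → X ⊆ E.events ∧ e ∈ E.events ∧ X.Finite ∧ CF E.conf X
  saturated : ∀ X Y e, E.enab X e → X ⊆ Y → Y ⊆ E.events → Y.Finite → CF E.conf Y → E.enab Y e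
  lab_dom : ∀ e a, E.lab e a → e ∈ E.events
  lab_fun : ∀ e a b, E.lab e a → E.lab e b → a = b
  lab_total : ∀ e ∈ E.events, ∃ a, E.lab e a

/-- The order ⊴ on event structures. -/
def leES {Ev Act : Type} (E E' : LES Ev Act) : Prop :=
  E.events ⊆ E'.events ∧
  (∀ e e', E.conf e e' → E'.conf e e') ∧
  (∀ X e, E.enab X e → E'.enab X e) ∧
  (∀ e ∈ E.events, ∀ a, E.lab e a ↔ E'.lab e a) ∧
  (∀ e e', e ∈ E.events → e' ∈ E.events → E'.conf e e' → E.conf e e') ∧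
  (∀ X e, X ⊆ E.events → e ∈ E.events → E'.enab X e → E.enab X e)

/-- The empty event structure. -/
def emptyES {Ev Act : Type} : LES Ev Act :=
  ⟨∅, fun _ _ => False, fun _ _ => False, fun _ _ => False⟩

/-- Componentwise union of a countable family of event structures. -/
def unionES {Ev Act : Type} (c : ℕ → LES Ev Act) : LES Ev Act :=
  ⟨⋃ n, (c n).events,
   fun e e' => ∃ n, (c n).conf e e',
   fun X e => ∃ n, (c n).enab X e,
   fun e a => ∃ n, (c n).lab e a⟩

/-- Least fixed point (Kleene iteration from the empty ES). -/
def fixES {Ev Act : Type} (F : LES Ev Act → LES Ev Act) : LES Ev Act :=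
  unionES (fun n => F^[n] emptyES)

/-- Events surviving after executing `e`. -/
def remEvents {Ev Act : Type} (E : LES Ev Act) (e : Ev) : Set Ev :=
  E.events \ ({e} ∪ {e' | E.conf e e'})

/-- Remainder `E[e]` of an event structure after executing `e`. -/
def remainder {Ev Act : Type} (E : LES Ev Act) (e : Ev) : LES Ev Act where
  events := remEvents E e
  conf := fun e1 e2 => E.conf e1 e2 ∧ e1 ∈ remEvents E e ∧ e2 ∈ remEvents E e
  enab := fun X e' => ∃ Y, E.enab Y e' ∧ e' ≠ e ∧ ¬ E.conf e' e ∧ CF E.conf (Y ∪ {e}) ∧ X = Y \ {e}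
  lab := fun e' a => E.lab e' a ∧ e' ∈ remEvents E e

/-- Finite plays (as lists), via iterated remainders. -/
def isPlayL {Ev Act : Type} : LES Ev Act → List Ev → Prop
  | _, [] => True
  | E, e :: σ => E.enab ∅ e ∧ isPlayL (remainder E e) σ

/-- The set of events occurring among the first `i` positions of `σ`. -/
def prefixSet {Ev : Type} (σ : ℕ → Option Ev) (i : ℕ) : Set Ev :=
  {e | ∃ j, j < i ∧ σ j = some e}

/-- The list of the first `i` events of `σ`. -/
def prefixList {Ev : Type} (σ : ℕ → Option Ev) : ℕ → List Ev
  | 0 => []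
  | i + 1 => prefixList σ i ++ (σ i).toList

/-- The remainder of `E` after the first `i` events of `σ`. -/
def remAfter {Ev Act : Type} (E : LES Ev Act) (σ : ℕ → Option Ev) : ℕ → LES Ev Act
  | 0 => E
  | i + 1 =>
    match σ i with
    | none => remAfter E σ i
    | some e => remainder (remAfter E σ i) e

/-- Plays, possibly infinite: `σ i = none` means the play has ended before `i`. -/
def IsPlay {Ev Act : Type} (E : LES Ev Act) (σ : ℕ → Option Ev) : Prop :=
  (∀ i j, i ≤ j → σ i = none → σ j = none) ∧
  (∀ i e, σ i = some e → (remAfter E σ i).enab ∅ e)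

/-- Innocence of participant `A` in the play `σ`. -/
def Innocent {Ev Act Ppt : Type} (π : Ev → Ppt) (E : LES Ev Act) (A : Ppt)
    (σ : ℕ → Option Ev) : Prop :=
  ∀ i e, π e = A → E.enab (prefixSet σ i) e →
    ∃ j, i ≤ j ∧ ∃ e', σ j = some e' ∧ (E.conf e' e ∨ e' = e)

/-- Strategies for `A`: map finite plays to sets of `A`'s events extending the play. -/
def IsStrategy {Ev Act Ppt : Type} (π : Ev → Ppt) (E : LES Ev Act) (A : Ppt)
    (S : List Ev → Set Ev) : Prop :=
  ∀ σ, isPlayL E σ → ∀ e ∈ S σ, π e = A ∧ isPlayL E (σ ++ [e])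

/-- `σ` conforms to strategy `S` for participant `A`. -/
def Conforms {Ev Ppt : Type} (π : Ev → Ppt) (A : Ppt) (S : List Ev → Set Ev)
    (σ : ℕ → Option Ev) : Prop :=
  ∀ i e, σ i = some e → π e = A → e ∈ S (prefixList σ i)

/-- Position `j` is within the play `σ`. -/
def validPos {Ev : Type} (σ : ℕ → Option Ev) (j : ℕ) : Prop :=
  ∀ k, k < j → σ k ≠ none

/-- Fairness of `σ` w.r.t. strategy `S`: permanently prescribed events happen. -/
def FairW {Ev : Type} (S : List Ev → Set Ev) (σ : ℕ → Option Ev) : Prop :=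
  ∀ i e, validPos σ i →
    (∀ j, i ≤ j → validPos σ j → e ∈ S (prefixList σ j)) →
    ∃ h, i ≤ h ∧ σ h = some e

/-- A contract: a labelled ES plus a partial payoff assignment. -/
structure Contract (Ev Act Ppt : Type) where
  es : LES Ev Act
  payoff : Ppt → Option (Set (ℕ → Option Ev))

/-- Winning plays of `A`. -/
def Wins {Ev Act Ppt : Type} (π : Ev → Ppt) (C : Contract Ev Act Ppt) (A : Ppt)
    (σ : ℕ → Option Ev) : Prop :=
  (∃ S, C.payoff A = some S ∧ σ ∈ S ∧ ∀ B : Ppt, Innocent π C.es B σ) ∨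
  (Innocent π C.es A σ ∧ ∃ B : Ppt, B ≠ A ∧ ¬ Innocent π C.es B σ)

/-- `S` is a winning strategy for `A` in `C`. -/
def WinningFor {Ev Act Ppt : Type} (π : Ev → Ppt) (C : Contract Ev Act Ppt) (A : Ppt)
    (S : List Ev → Set Ev) : Prop :=
  IsStrategy π C.es A S ∧
  ∀ σ, IsPlay C.es σ → Conforms π A S σ → FairW S σ → Wins π C A σ

/-- The eager strategy of `A`: do all currently enabled events of `A`. -/
def eager {Ev Act Ppt : Type} (π : Ev → Ppt) (E : LES Ev Act) (A : Ppt)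
    (σ : List Ev) : Set Ev :=
  {e | π e = A ∧ E.enab {x | x ∈ σ} e}

/-- Composability of contracts: payoff domains are disjoint. -/
def Composable {Ev Act Ppt : Type} (C C' : Contract Ev Act Ppt) : Prop :=
  ∀ A : Ppt, C.payoff A = none ∨ C'.payoff A = none

/-- Plain (componentwise-union) composition of contracts. -/
def ccompU {Ev Act Ppt : Type} (C C' : Contract Ev Act Ppt) : Contract Ev Act Ppt :=
  ⟨⟨C.es.events ∪ C'.es.events,
    fun e e' => C.es.conf e e' ∨ C'.es.conf e e',
    fun X e => C.es.enab X e ∨ C'.es.enab X e,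
    fun e a => C.es.lab e a ∨ C'.es.lab e a⟩,
   fun A => (C.payoff A).orElse (fun _ => C'.payoff A)⟩

/-! ### Binary session types -/

/-- Session types (binary choices encode finite non-empty choices), extended with
committed branches `comm`, one-position buffers `buf`, and the stuck state `zero`. -/
inductive Proc (Act : Type) where
  | success : Proc Act
  | send : Act → Proc Act → Proc Act      -- ā.P as an internal branch
  | recv : Act → Proc Act → Proc Act      -- a.P as an external branch
  | ichoice : Proc Act → Proc Act → Proc Act  -- ⊕
  | echoice : Proc Act → Proc Act → Proc Act  -- +
  | var : ℕ → Proc Act                    -- de Bruijn variable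
  | recur : Proc Act → Proc Act             -- rec x.P
  | comm : Act → Proc Act → Proc Act      -- committed internal branch ā.P
  | buf : Act → Proc Act → Proc Act       -- [ā]P
  | zero : Proc Act                       -- 0

/-- Branches of an internal choice. -/
inductive IBr {Act : Type} : Proc Act → Act → Proc Act → Prop where
  | send {a P} : IBr (Proc.send a P) a P
  | il {P Q a R} : IBr P a R → IBr (Proc.ichoice P Q) a R
  | ir {P Q a R} : IBr Q a R → IBr (Proc.ichoice P Q) a R

/-- Branches of an external choice. -/
inductive EBr {Act : Type} : Proc Act → Act → Proc Act → Prop where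
  | recv {a P} : EBr (Proc.recv a P) a P
  | el {P Q a R} : EBr P a R → EBr (Proc.echoice P Q) a R
  | er {P Q a R} : EBr Q a R → EBr (Proc.echoice P Q) a R

/-- Substitution of `Q` for de Bruijn variable `k`. -/
def subst {Act : Type} (Q : Proc Act) : ℕ → Proc Act → Proc Act
  | _, .success => .success
  | k, .send a P => .send a (subst Q k P)
  | k, .recv a P => .recv a (subst Q k P)
  | k, .ichoice P1 P2 => .ichoice (subst Q k P1) (subst Q k P2)
  | k, .echoice P1 P2 => .echoice (subst Q k P1) (subst Q k P2)
  | k, .var m => if m = k then Q else .var m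
  | k, .recur P => .recur (subst Q (k+1) P)
  | k, .comm a P => .comm a (subst Q k P)
  | k, .buf a P => .buf a (subst Q k P)
  | _, .zero => .zero

/-- Standard (reduction) semantics of compositions `P ∥ Q`. -/
inductive Step {Act : Type} : Proc Act × Proc Act → Proc Act × Proc Act → Prop where
  | commitL {P P' Q : Proc Act} {a : Act} : IBr P a P' → Step (P, Q) (Proc.comm a P', Q)
  | commitR {P Q Q' : Proc Act} {a : Act} : IBr Q a Q' → Step (P, Q) (P, Proc.comm a Q')
  | unfoldL {P Q : Proc Act} : Step (Proc.recur P, Q) (subst (Proc.recur P) 0 P, Q)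
  | unfoldR {P Q : Proc Act} : Step (P, Proc.recur Q) (P, subst (Proc.recur Q) 0 Q)
  | syncL {P Q Q' : Proc Act} {a : Act} : EBr Q a Q' → Step (Proc.comm a P, Q) (P, Q')
  | syncR {P P' Q : Proc Act} {a : Act} : EBr P a P' → Step (P, Proc.comm a Q) (P', Q)

/-- A stuck configuration. -/
def Stuck {Act : Type} (c : Proc Act × Proc Act) : Prop := ∀ c', ¬ Step c c'

/-- Compliance: every reachable stuck configuration has the client succeeded. -/
def Compliant {Act : Type} (P Q : Proc Act) : Prop :=
  ∀ c, Relation.ReflTransGen Step (P, Q) c → Stuck c → c.1 = Proc.success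

/-- Well-formed session types: `WF n U P` means free variables are `< n` and
variables satisfying `¬ U` may only occur guarded (under a prefix). -/
inductive WF {Act : Type} : ℕ → (ℕ → Prop) → Proc Act → Prop where
  | success {n U} : WF n U (Proc.success : Proc Act)
  | send {n U} {a : Act} {P} : WF n (fun _ => True) P → WF n U (Proc.send a P)
  | recv {n U} {a : Act} {P} : WF n (fun _ => True) P → WF n U (Proc.recv a P)
  | ichoice {n U} {P Q : Proc Act} : WF n U P → WF n U Q → WF n U (Proc.ichoice P Q)
  | echoice {n U} {P Q : Proc Act} : WF n U P → WF n U Q → WF n U (Proc.echoice P Q)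
  | var {n U m} : m < n → U m → WF n U (Proc.var m : Proc Act)
  | recur {n U} {P : Proc Act} : WF (n+1) (fun k => ∃ j, k = j + 1 ∧ U j) P → WF n U (Proc.recur P)

/-- Closed, guarded session types. -/
def WF0 {Act : Type} (P : Proc Act) : Prop := WF 0 (fun _ => False) P

/-- Labels of the event structures and of the turn-based semantics:
inputs `a`, outputs `ā`, and the success label ✓. -/
inductive Lbl (Act : Type) where
  | inp : Act → Lbl Act
  | out : Act → Lbl Act
  | tick : Lbl Act

/-- Turn-based labelled semantics with one-position buffers (recursion unfolded tacitly). -/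
inductive TStep {Act : Type} : Proc Act × Proc Act → Lbl Act → Proc Act × Proc Act → Prop where
  | outL {P P' R : Proc Act} {a : Act} : IBr P a P' → TStep (P, R) (Lbl.out a) (Proc.buf a P', R)
  | outR {P R R' : Proc Act} {a : Act} : IBr R a R' → TStep (P, R) (Lbl.out a) (P, Proc.buf a R')
  | inL {P P' R : Proc Act} {a : Act} : EBr P a P' → TStep (P, Proc.buf a R) (Lbl.inp a) (P', R)
  | inR {P R R' : Proc Act} {a : Act} : EBr R a R' → TStep (Proc.buf a P, R) (Lbl.inp a) (P, R')
  | tickL {P : Proc Act} : TStep (Proc.success, P) Lbl.tick (Proc.zero, P)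
  | tickR {P : Proc Act} : TStep (P, Proc.success) Lbl.tick (P, Proc.zero)
  | unfL {P Q c l} : TStep (subst (Proc.recur P) 0 P, Q) l c → TStep (Proc.recur P, Q) l c
  | unfR {P Q c l} : TStep (P, subst (Proc.recur Q) 0 Q) l c → TStep (P, Proc.recur Q) l c

/-! ### ES denotation of session types -/

/-- Canonical event renaming used for freshness: prepend `n` to the path. -/
def shiftE {Ppt : Type} (n : ℕ) : Ppt × List ℕ → Ppt × List ℕ := fun e => (e.1, n :: e.2)

/-- Rename all events of `E` by `shiftE n`. -/
def shiftES {Ppt Act : Type} (n : ℕ) (E : LES (Ppt × List ℕ) Act) : LES (Ppt × List ℕ) Act :=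
  ⟨shiftE n '' E.events,
   fun e e' => ∃ d d', e = shiftE n d ∧ e' = shiftE n d' ∧ E.conf d d',
   fun X e => ∃ Y d, X = shiftE n '' Y ∧ e = shiftE n d ∧ E.enab Y d,
   fun e a => ∃ d, e = shiftE n d ∧ E.lab d a⟩

/-- Prefixing with a fresh event `ea` labelled `α`. -/
def prefixES {Ev Act : Type} (ea : Ev) (α : Act) (E : LES Ev Act) : LES Ev Act :=
  ⟨insert ea E.events, E.conf,
   fun X e => (X = ∅ ∧ e = ea) ∨ ∃ Y, E.enab Y e ∧ X = insert ea Y,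
   fun e a => (e = ea ∧ a = α) ∨ E.lab e a⟩

/-- Choice: disjoint union with initial events of different branches in conflict. -/
def choiceES {Ev Act : Type} (E1 E2 : LES Ev Act) : LES Ev Act :=
  ⟨E1.events ∪ E2.events,
   fun e e' => E1.conf e e' ∨ E2.conf e e' ∨
     (E1.enab ∅ e ∧ E2.enab ∅ e') ∨ (E2.enab ∅ e ∧ E1.enab ∅ e'),
   fun X e => E1.enab X e ∨ E2.enab X e,
   fun e a => E1.lab e a ∨ E2.lab e a⟩

/-- Denotation of ✓: a single ✓-labelled enabled event of `A`. -/
def successES {Ppt Act : Type} (A : Ppt) : LES (Ppt × List ℕ) (Lbl Act) :=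
  ⟨{(A, ([] : List ℕ))}, fun _ _ => False,
   fun X e => X = ∅ ∧ e = (A, []),
   fun e l => e = (A, []) ∧ l = Lbl.tick⟩

/-- Extend an environment with a new denotation for variable 0. -/
def consEnv {Ev Act : Type} (E : LES Ev Act) (ρ : ℕ → LES Ev Act) : ℕ → LES Ev Act
  | 0 => E
  | k + 1 => ρ k

/-- ES denotation `⟦P⟧_A ρ` of a session type, all events owned by `A`. -/
def semST {Act Ppt : Type} (A : Ppt) :
    (ℕ → LES (Ppt × List ℕ) (Lbl Act)) → Proc Act → LES (Ppt × List ℕ) (Lbl Act)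
  | _, .success => successES A
  | ρ, .send a P => prefixES (A, []) (Lbl.out a) (shiftES 0 (semST A ρ P))
  | ρ, .recv a P => prefixES (A, []) (Lbl.inp a) (shiftES 0 (semST A ρ P))
  | ρ, .ichoice P Q => choiceES (shiftES 0 (semST A ρ P)) (shiftES 1 (semST A ρ Q))
  | ρ, .echoice P Q => choiceES (shiftES 0 (semST A ρ P)) (shiftES 1 (semST A ρ Q))
  | ρ, .var m => ρ m
  | ρ, .recur P => fixES (fun E => semST A (consEnv E ρ) P)
  | _, .comm _ _ => emptyES
  | _, .buf _ _ => emptyES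
  | _, .zero => emptyES

/-- The complementary label. -/
def coLbl {Act : Type} : Lbl Act → Lbl Act
  | .inp a => .out a
  | .out a => .inp a
  | .tick => .tick

/-- Co-actions (outputs and ✓). -/
def isCo {Act : Type} : Lbl Act → Prop
  | .inp _ => False
  | _ => True

/-- `e'` (in `Ei`) is matched by the synchronizing event `e''` (in `Ej`). -/
def LabMatch {Ev Act : Type} (Ei Ej : LES Ev (Lbl Act)) (e' e'' : Ev) : Prop :=
  ∃ l, Ei.lab e' l ∧ Ej.lab e'' (coLbl l)

/-- Composed enabling for a co-action event of side `i`. -/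
def parEnabCo {Ev Act : Type} (Ei Ej : LES Ev (Lbl Act)) (Z : Set Ev) (e : Ev) : Prop :=
  ∃ X Y, Ei.enab X e ∧ (∃ l, Ei.lab e l ∧ isCo l) ∧ Y ⊆ Ej.events ∧
    (∀ e' ∈ X, ∃ e'' ∈ Y, LabMatch Ei Ej e' e'') ∧ Z = X ∪ Y

/-- Composed enabling for an input event of side `i` (needs its own co-event `eh`). -/
def parEnabIn {Ev Act : Type} (Ei Ej : LES Ev (Lbl Act)) (Z : Set Ev) (e : Ev) : Prop :=
  ∃ X Y eh a, Ei.enab X e ∧ Ei.lab e (Lbl.inp a) ∧ Y ⊆ Ej.events ∧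
    eh ∈ Ej.events ∧ Ej.lab eh (Lbl.out a) ∧
    (∀ e' ∈ X, ∃ e'' ∈ Y, LabMatch Ei Ej e' e'') ∧ Z = X ∪ Y ∪ {eh}

/-- ES denotation of a composition `P₁ ∥ P₂`, given the two sides. -/
def parES {Ev Act : Type} (E1 E2 : LES Ev (Lbl Act)) : LES Ev (Lbl Act) :=
  ⟨E1.events ∪ E2.events,
   fun e e' => E1.conf e e' ∨ E2.conf e e',
   fun Z e => parEnabCo E1 E2 Z e ∨ parEnabCo E2 E1 Z e ∨
              parEnabIn E1 E2 Z e ∨ parEnabIn E2 E1 Z e,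
   fun e l => E1.lab e l ∨ E2.lab e l⟩

/-- Transitions of the LTS `ETS(E)`: fire an `∅`-enabled event, pass to the remainder. -/
def ETStep {Ev Act : Type} (E : LES Ev Act) (l : Act) (E' : LES Ev Act) : Prop :=
  ∃ e, E.enab ∅ e ∧ E.lab e l ∧ E' = remainder E e

/-- Payoff of `A`: finite plays must contain a ✓-labelled event of `A`. -/
def payoffOf {Act Ppt : Type} (A : Ppt) (E : LES (Ppt × List ℕ) (Lbl Act)) :
    Set (ℕ → Option (Ppt × List ℕ)) :=
  {σ | (∃ i, σ i = none) → ∃ j e, σ j = some e ∧ e.1 = A ∧ E.lab e Lbl.tick}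

/-- The contract `𝓒_A(P)` of a session type. -/
noncomputable def contractOf {Act Ppt : Type} [DecidableEq Ppt] (A : Ppt) (P : Proc Act) :
    Contract (Ppt × List ℕ) (Lbl Act) Ppt :=
  ⟨semST A (fun _ => emptyES) P,
   fun X => if X = A then some (payoffOf A (semST A (fun _ => emptyES) P)) else none⟩

/-- Composition of (session-type) contracts: the game is played on the composed ES. -/
noncomputable def ccomp {Ev Act Ppt : Type} (C C' : Contract Ev (Lbl Act) Ppt) :
    Contract Ev (Lbl Act) Ppt :=
  ⟨parES C.es C'.es, fun X => (C.payoff X).orElse (fun _ => C'.payoff X)⟩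

/-- Recursion-free (and variable-free) session types. -/
inductive NoRec {Act : Type} : Proc Act → Prop where
  | success : NoRec (Proc.success : Proc Act)
  | send {a : Act} {P} : NoRec P → NoRec (Proc.send a P)
  | recv {a : Act} {P} : NoRec P → NoRec (Proc.recv a P)
  | ichoice {P Q : Proc Act} : NoRec P → NoRec Q → NoRec (Proc.ichoice P Q)
  | echoice {P Q : Proc Act} : NoRec P → NoRec Q → NoRec (Proc.echoice P Q)

end ESC


namespace ESC

section Aux
variable {Ev Act Ppt : Type}

lemma prefixSet_eq_list (σ : ℕ → Option Ev) :
    ∀ j, prefixSet σ j = {x | x ∈ prefixList σ j} := by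
  intro j
  induction j with
  | zero =>
    ext x; simp [prefixSet, prefixList]
  | succ j ih =>
    ext x
    simp only [prefixSet, Set.mem_setOf_eq, prefixList, List.mem_append]
    constructor
    · rintro ⟨m, hm, hs⟩
      rcases Nat.lt_succ_iff_lt_or_eq.mp hm with h | rfl
      · left
        have : x ∈ prefixSet σ j := ⟨m, h, hs⟩
        rw [ih] at this; exact this
      · right; simp [hs]
    · rintro (h | h)
      · have : x ∈ prefixSet σ j := by rw [ih]; exact h
        obtain ⟨m, hm, hs⟩ := this
        exact ⟨m, Nat.lt_succ_of_lt hm, hs⟩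
      · refine ⟨j, Nat.lt_succ_self j, ?_⟩
        cases hσj : σ j with
        | none => rw [hσj] at h; simp [Option.toList] at h
        | some y => rw [hσj] at h; simp [Option.toList] at h; rw [h]

lemma prefixSet_mono (σ : ℕ → Option Ev) {i j : ℕ} (h : i ≤ j) :
    prefixSet σ i ⊆ prefixSet σ j := by
  rintro x ⟨m, hm, hs⟩
  exact ⟨m, lt_of_lt_of_le hm h, hs⟩

lemma prefixSet_finite (σ : ℕ → Option Ev) (j : ℕ) : (prefixSet σ j).Finite := by
  induction j with
  | zero =>
    have : prefixSet σ 0 = ∅ := by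
      ext x; simp [prefixSet]
    rw [this]; exact Set.finite_empty
  | succ j ih =>
    have hsub : prefixSet σ (j+1) ⊆ prefixSet σ j ∪ {e | σ j = some e} := by
      rintro x ⟨m, hm, hs⟩
      rcases Nat.lt_succ_iff_lt_or_eq.mp hm with h | rfl
      · exact Or.inl ⟨m, h, hs⟩
      · exact Or.inr hs
    have hss : ({e | σ j = some e} : Set Ev).Subsingleton := by
      intro a ha b hb
      simp only [Set.mem_setOf_eq] at ha hb
      rw [ha] at hb; exact Option.some_injective _ hb
    exact Set.Finite.subset (ih.union hss.finite) hsub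

variable {E : LES Ev Act} {σ : ℕ → Option Ev}

lemma remAfter_events_step (i : ℕ) :
    (remAfter E σ (i+1)).events ⊆ (remAfter E σ i).events := by
  intro x hx
  cases hσi : σ i with
  | none => simpa [remAfter, hσi] using hx
  | some e =>
    simp only [remAfter, hσi] at hx
    exact hx.1

lemma remAfter_events_mono {i j : ℕ} (h : i ≤ j) :
    (remAfter E σ j).events ⊆ (remAfter E σ i).events := by
  induction j, h using Nat.le_induction with
  | base => exact subset_rfl
  | succ j hij ih => exact fun x hx => ih (remAfter_events_step j hx)

lemma remAfter_conf_iff (hE : IsES E) :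
    ∀ (i : ℕ) (e1 e2 : Ev), (remAfter E σ i).conf e1 e2 ↔
      E.conf e1 e2 ∧ e1 ∈ (remAfter E σ i).events ∧ e2 ∈ (remAfter E σ i).events := by
  intro i
  induction i with
  | zero =>
    intro e1 e2
    simp only [remAfter]
    exact ⟨fun h => ⟨h, (hE.conf_mem _ _ h).1, (hE.conf_mem _ _ h).2⟩, fun h => h.1⟩
  | succ i ih =>
    intro e1 e2
    cases hσi : σ i with
    | none => simpa [remAfter, hσi] using ih e1 e2
    | some e =>
      simp only [remAfter, hσi, remainder]
      constructor
      · rintro ⟨hc, h1, h2⟩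
        exact ⟨((ih e1 e2).mp hc).1, h1, h2⟩
      · rintro ⟨hc, h1, h2⟩
        refine ⟨(ih e1 e2).mpr ⟨hc, ?_, ?_⟩, h1, h2⟩
        · exact h1.1
        · exact h2.1

lemma remAfter_enab_mem (hE : IsES E) :
    ∀ (i : ℕ) (X : Set Ev) (e : Ev),
      (remAfter E σ i).enab X e → e ∈ (remAfter E σ i).events := by
  intro i
  induction i with
  | zero =>
    intro X e h
    exact (hE.enab_dom X e h).2.1
  | succ i ih =>
    intro X e h
    cases hσi : σ i with
    | none =>
      rw [remAfter, hσi] at h ⊢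
      exact ih X e h
    | some d =>
      rw [remAfter, hσi] at h ⊢
      obtain ⟨Y, hY, hne, hnc, _, _⟩ := h
      have hmem : e ∈ (remAfter E σ i).events := ih Y e hY
      refine ⟨hmem, ?_⟩
      rintro (h1 | h1)
      · exact hne h1
      · simp only [Set.mem_setOf_eq] at h1
        apply hnc
        obtain ⟨hc, hd, he⟩ := (remAfter_conf_iff hE i d e).mp h1
        exact (remAfter_conf_iff hE i e d).mpr ⟨hE.conf_symm _ _ hc, he, hd⟩

lemma play_mem (hE : IsES E) (hσ : IsPlay E σ) {k : ℕ} {e : Ev}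
    (hk : σ k = some e) : e ∈ (remAfter E σ k).events :=
  remAfter_enab_mem hE k ∅ e (hσ.2 k e hk)

lemma play_mem_events (hE : IsES E) (hσ : IsPlay E σ) {k : ℕ} {e : Ev}
    (hk : σ k = some e) : e ∈ E.events :=
  remAfter_events_mono (Nat.zero_le k) (play_mem hE hσ hk)

lemma play_no_conf (hE : IsES E) (hσ : IsPlay E σ) {m k : ℕ} {e d : Ev}
    (hmk : m < k) (hm : σ m = some e) (hk : σ k = some d) : ¬ E.conf e d := by
  intro hc
  have hdk : d ∈ (remAfter E σ (m+1)).events :=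
    remAfter_events_mono (Nat.succ_le_of_lt hmk) (play_mem hE hσ hk)
  have hde : d ∈ (remAfter E σ m).events := remAfter_events_step m hdk
  have hme : e ∈ (remAfter E σ m).events := play_mem hE hσ hm
  rw [remAfter, hm] at hdk
  exact hdk.2 (Or.inr ((remAfter_conf_iff hE m e d).mpr ⟨hc, hme, hde⟩))

lemma play_prefixSet_subset (hE : IsES E) (hσ : IsPlay E σ) (j : ℕ) :
    prefixSet σ j ⊆ E.events := by
  rintro x ⟨m, _, hs⟩
  exact play_mem_events hE hσ hs

lemma play_prefixSet_cf (hE : IsES E) (hσ : IsPlay E σ) (j : ℕ) :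
    CF E.conf (prefixSet σ j) := by
  rintro e ⟨m, _, hm⟩ e' ⟨m', _, hm'⟩ hc
  rcases lt_trichotomy m m' with h | h | h
  · exact play_no_conf hE hσ h hm hm' hc
  · subst h
    rw [hm] at hm'
    have := Option.some_injective _ hm'
    subst this
    exact hE.conf_irrefl e hc
  · exact play_no_conf hE hσ h hm' hm (hE.conf_symm _ _ hc)

end Aux

end ESC

namespace ESC

/-- Every fair play conforming to the eager strategy of `A` makes `A` innocent. -/
theorem eager_innocent {Ev Act Ppt : Type} (π : Ev → Ppt) (E : LES Ev Act)
    (hE : IsES E) (A : Ppt) (σ : ℕ → Option Ev)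
    (hσ : IsPlay E σ)
    (hconf : Conforms π A (eager π E A) σ)
    (hfair : FairW (eager π E A) σ) :
    Innocent π E A σ := by
  intro i e hA henab
  by_cases hv : validPos σ i
  · have key : ∀ j, i ≤ j → validPos σ j → e ∈ eager π E A (prefixList σ j) := by
      intro j hij hvj
      refine ⟨hA, ?_⟩
      have hset : {x | x ∈ prefixList σ j} = prefixSet σ j := (prefixSet_eq_list σ j).symm
      rw [hset]
      exact hE.saturated _ _ _ henab (prefixSet_mono σ hij)
        (play_prefixSet_subset hE hσ j) (prefixSet_finite σ j) (play_prefixSet_cf hE hσ j)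
    obtain ⟨h, hih, hsh⟩ := hfair i e hv key
    exact ⟨h, hih, e, hsh, Or.inr rfl⟩
  · exfalso
    have hex : ∃ k, σ k = none := by
      simp only [validPos, not_forall, not_not] at hv
      obtain ⟨k, _, hk⟩ := hv
      exact ⟨k, hk⟩
    classical
    set k := Nat.find hex with hkdef
    have hkn : σ k = none := Nat.find_spec hex
    have hkv : validPos σ k := by
      intro m hm
      exact Nat.find_min hex hm
    have hki : k < i := by
      by_contra hc
      push_neg at hc
      exact hv fun m hm => hkv m (lt_of_lt_of_le hm hc)
    have hnone : ∀ m, k ≤ m → σ m = none := fun m hm => hσ.1 k m hm hkn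
    have hpeq : prefixSet σ i = prefixSet σ k := by
      apply Set.Subset.antisymm
      · rintro x ⟨m, hm, hs⟩
        refine ⟨m, ?_, hs⟩
        by_contra hc
        push_neg at hc
        rw [hnone m hc] at hs
        exact Option.some_ne_none _ hs.symm
      · exact prefixSet_mono σ (le_of_lt hki)
    have key : ∀ j, k ≤ j → validPos σ j → e ∈ eager π E A (prefixList σ j) := by
      intro j hkj hvj
      rcases eq_or_lt_of_le hkj with heq | hlt
      · subst heq
        refine ⟨hA, ?_⟩
        have hset : {x | x ∈ prefixList σ k} = prefixSet σ k := (prefixSet_eq_list σ k).symm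
        rw [hset, ← hpeq]
        exact henab
      · exact absurd hkn (hvj k hlt)
    obtain ⟨h, hkh, hsh⟩ := hfair k e hkv key
    rw [hnone h hkh] at hsh
    exact Option.some_ne_none _ hsh.symm


end ESC
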